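/- Let T : ℝ[x] → ℝ[x] be an arbitrary linear operator with differential coefficients (Q_k)_{k≥0}, and set Q_m = 0 for m < 0. For n ∈ ℤ and k ∈ ℕ₀ define b_{n,k} = Σ_{j=0}^{k} C(k,j) · Q_{j+n}^{(j)}(0). Then: (i) for each n ∈ ℤ, the linear operator S_n defined by S_n[p] = Σ_{k≥0, k+n≥0} (Q_{k+n}^{(k)}(0)/k!) x^k p^{(k)} satisfies S_n[x^k] = b_{n,k} x^k for every k ∈ ℕ₀; (ii) for every p ∈ ℝ[x], T[p] = Σ_{n∈ℤ} Σ_{k≥0, k+n≥0} (Q_{k+n}^{(k)}(0)/k!) x^k p^{(k+n)}, where only finitely many terms are nonzero; (iii) the family (b_{n,k})_{n∈ℤ, k∈ℕ₀} arising this way is uniquely determined by T. -/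

import Mathlib

open Polynomial Finset

noncomputable section

/-- The physicists' Hermite polynomials. -/
def hermitePoly (n : ℕ) : Polynomial ℝ :=
  ∑ k ∈ Finset.range (n / 2 + 1),
    Polynomial.C ((-1 : ℝ) ^ k * n.factorial * 2 ^ (n - 2 * k) /
      (k.factorial * (n - 2 * k).factorial)) * Polynomial.X ^ (n - 2 * k)

/-- The Laguerre polynomials. -/
def laguerrePoly (n : ℕ) : Polynomial ℝ :=
  ∑ k ∈ Finset.range (n + 1),
    Polynomial.C ((-1 : ℝ) ^ k / k.factorial * n.choose k) * Polynomial.X ^ k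

/-- A real polynomial is hyperbolic if all of its complex roots are real
(the zero polynomial counts as hyperbolic). -/
def Hyperbolic (p : Polynomial ℝ) : Prop :=
  p = 0 ∨ ∀ z : ℂ, Polynomial.aeval z p = 0 → z.im = 0

/-- A linear operator on ℝ[x] preserves hyperbolicity. -/
def HypPreserving (T : Polynomial ℝ →ₗ[ℝ] Polynomial ℝ) : Prop :=
  ∀ p : Polynomial ℝ, Hyperbolic p → Hyperbolic (T p)

/-- Classical multiplier sequence. -/
def ClassicalMS (γ : ℕ → ℝ) : Prop :=
  ∃ T : Polynomial ℝ →ₗ[ℝ] Polynomial ℝ,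
    (∀ n, T (Polynomial.X ^ n) = γ n • Polynomial.X ^ n) ∧ HypPreserving T

/-- Hermite multiplier sequence. -/
def HermiteMS (γ : ℕ → ℝ) : Prop :=
  ∃ T : Polynomial ℝ →ₗ[ℝ] Polynomial ℝ,
    (∀ n, T (hermitePoly n) = γ n • hermitePoly n) ∧ HypPreserving T

/-- Laguerre multiplier sequence. -/
def LaguerreMS (γ : ℕ → ℝ) : Prop :=
  ∃ T : Polynomial ℝ →ₗ[ℝ] Polynomial ℝ,
    (∀ n, T (laguerrePoly n) = γ n • laguerrePoly n) ∧ HypPreserving T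

/-- A sequence is trivial if all entries vanish except possibly two at consecutive indices. -/
def TrivialSeq (γ : ℕ → ℝ) : Prop :=
  ∃ m : ℕ, ∀ n, n ≠ m → n ≠ m + 1 → γ n = 0

section Aux
open Polynomial Finset

lemma eval_iter_deriv_zero_div (p : Polynomial ℝ) (k : ℕ) :
    (Polynomial.derivative^[k] p).eval 0 / k.factorial = p.coeff k := by
  rw [← Polynomial.coeff_zero_eq_eval_zero, Polynomial.coeff_iterate_derivative]
  simp only [zero_add, Nat.descFactorial_self, nsmul_eq_mul]
  field_simp

lemma myTaylorMulAux (p q : Polynomial ℝ) (M : ℕ) (h : p.natDegree ≤ M) :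
    ∑ k ∈ Finset.range (M + 1), p.coeff k • (Polynomial.X ^ k * q) = p * q := by
  have := p.as_sum_range' (M + 1) (Nat.lt_succ_of_le h)
  calc ∑ k ∈ Finset.range (M + 1), p.coeff k • (Polynomial.X ^ k * q)
      = (∑ k ∈ Finset.range (M + 1), Polynomial.C (p.coeff k) * Polynomial.X ^ k) * q := by
        rw [Finset.sum_mul]
        exact Finset.sum_congr rfl fun k _ => by rw [Polynomial.smul_eq_C_mul, mul_assoc]
    _ = p * q := by simp_rw [Polynomial.C_mul_X_pow_eq_monomial]; rw [← this]

end Aux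

/-- the doubly-infinite (Laurent-type) operator diagonalization
`T = Σ_{n ∈ ℤ} Tₙ Dⁿ` of an arbitrary linear operator on ℝ[x]. -/
theorem stmt_2
    (T : Polynomial ℝ →ₗ[ℝ] Polynomial ℝ) (Q : ℕ → Polynomial ℝ)
    (hQ : ∀ p : Polynomial ℝ,
      T p = ∑ k ∈ Finset.range (p.natDegree + 1), Q k * (Polynomial.derivative^[k] p))
    (Qz : ℤ → Polynomial ℝ)
    (hQz : ∀ k : ℕ, Qz k = Q k) (hQzneg : ∀ m : ℤ, m < 0 → Qz m = 0)
    (b : ℤ → ℕ → ℝ)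
    (hb : ∀ (n : ℤ) (k : ℕ), b n k = ∑ j ∈ Finset.range (k + 1),
      (k.choose j : ℝ) * (Polynomial.derivative^[j] (Qz (j + n))).eval 0)
    (S : ℤ → Polynomial ℝ →ₗ[ℝ] Polynomial ℝ)
    (hS : ∀ (n : ℤ) (p : Polynomial ℝ), S n p =
      ∑ k ∈ Finset.range (p.natDegree + 1),
        ((Polynomial.derivative^[k] (Qz (k + n))).eval 0 / k.factorial) •
          (Polynomial.X ^ k * Polynomial.derivative^[k] p)) :
    -- (i) each Sₙ is the classical diagonal operator with eigenvalues b n k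
    (∀ (n : ℤ) (k : ℕ), S n (Polynomial.X ^ k) = b n k • Polynomial.X ^ k) ∧
    -- (ii) T p is the (finitely supported) doubly-indexed sum Σₙ Σₖ (Q_{k+n}^{(k)}(0)/k!) xᵏ p^{(k+n)}
    (∀ p : Polynomial ℝ,
      ({q : ℤ × ℕ |
        ((Polynomial.derivative^[q.2] (Qz (q.2 + q.1))).eval 0 / q.2.factorial) •
          (Polynomial.X ^ q.2 * Polynomial.derivative^[((q.2 : ℤ) + q.1).toNat] p) ≠ 0}).Finite ∧
      T p = ∑ᶠ q : ℤ × ℕ,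
        ((Polynomial.derivative^[q.2] (Qz (q.2 + q.1))).eval 0 / q.2.factorial) •
          (Polynomial.X ^ q.2 * Polynomial.derivative^[((q.2 : ℤ) + q.1).toNat] p)) ∧
    -- (iii) the family b is uniquely determined by T
    (∀ (Q' : ℕ → Polynomial ℝ) (Qz' : ℤ → Polynomial ℝ) (b' : ℤ → ℕ → ℝ),
      (∀ p : Polynomial ℝ,
        T p = ∑ k ∈ Finset.range (p.natDegree + 1), Q' k * (Polynomial.derivative^[k] p)) →
      (∀ k : ℕ, Qz' k = Q' k) → (∀ m : ℤ, m < 0 → Qz' m = 0) →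
      (∀ (n : ℤ) (k : ℕ), b' n k = ∑ j ∈ Finset.range (k + 1),
        (k.choose j : ℝ) * (Polynomial.derivative^[j] (Qz' (j + n))).eval 0) →
      ∀ (n : ℤ) (k : ℕ), b' n k = b n k) := by
  constructor
  · -- part (i)
    intro n k
    rw [hS, hb, natDegree_X_pow, Finset.sum_smul]
    refine Finset.sum_congr rfl fun j hj => ?_
    rw [Finset.mem_range, Nat.lt_succ_iff] at hj
    rw [Polynomial.iterate_derivative_X_pow_eq_smul, mul_smul_comm, ← pow_add,
      Nat.add_sub_cancel' hj, smul_smul]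
    congr 1
    rw [Nat.descFactorial_eq_factorial_mul_choose]
    field_simp
    push_cast
    ring
  constructor
  · -- part (ii)
    intro p
    set D := p.natDegree with hD
    set M := (Finset.range (D + 1)).sup (fun m => (Q m).natDegree) with hM
    set F : Finset (ℤ × ℕ) :=
      (Finset.range (D + 1) ×ˢ Finset.range (M + 1)).image
        (fun mk => ((mk.1 : ℤ) - mk.2, mk.2)) with hF
    set f : ℤ × ℕ → Polynomial ℝ := fun q =>
      ((Polynomial.derivative^[q.2] (Qz (q.2 + q.1))).eval 0 / q.2.factorial) •
        (Polynomial.X ^ q.2 * Polynomial.derivative^[((q.2 : ℤ) + q.1).toNat] p) with hf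
    have hsupp : Function.support f ⊆ ↑F := by
      rintro ⟨n, k⟩ hne
      simp only [Function.mem_support, hf] at hne
      by_cases h0 : 0 ≤ (k : ℤ) + n
      · set m := ((k : ℤ) + n).toNat with hm
        have hmn : (k : ℤ) + n = m := (Int.toNat_of_nonneg h0).symm
        have hQm : Qz ((k : ℤ) + n) = Q m := by rw [hmn]; exact hQz m
        have hmD : m ≤ D := by
          by_contra hcon; push_neg at hcon
          exact hne (by
            have hz : Polynomial.derivative^[m] p = 0 :=
              Polynomial.iterate_derivative_eq_zero hcon
            simp only [← hm, hz, mul_zero, smul_zero])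
        have hkM : k ≤ M := by
          by_contra hcon; push_neg at hcon
          refine hne ?_
          have hz : Polynomial.derivative^[k] (Qz ((k : ℤ) + n)) = 0 := by
            rw [hQm]
            exact Polynomial.iterate_derivative_eq_zero
              (lt_of_le_of_lt (Finset.le_sup (f := fun m => (Q m).natDegree) (Finset.mem_range.mpr (Nat.lt_succ_of_le hmD))) hcon)
          simp only [hz, Polynomial.eval_zero, zero_div, zero_smul]
        refine Finset.mem_coe.mpr (Finset.mem_image.mpr ⟨(m, k), ?_, ?_⟩)
        · exact Finset.mem_product.mpr ⟨Finset.mem_range.mpr (Nat.lt_succ_of_le hmD),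
            Finset.mem_range.mpr (Nat.lt_succ_of_le hkM)⟩
        · exact Prod.ext (by omega) rfl
      · refine absurd ?_ hne
        have hz : Qz ((k : ℤ) + n) = 0 := hQzneg _ (by omega)
        simp only [hz, Polynomial.iterate_derivative_zero, Polynomial.eval_zero, zero_div,
          zero_smul]
    refine ⟨Set.Finite.subset F.finite_toSet hsupp, ?_⟩
    rw [show (∑ᶠ q : ℤ × ℕ,
        ((Polynomial.derivative^[q.2] (Qz (q.2 + q.1))).eval 0 / q.2.factorial) •
          (Polynomial.X ^ q.2 * Polynomial.derivative^[((q.2 : ℤ) + q.1).toNat] p)) =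
        ∑ᶠ q, f q from rfl,
      finsum_eq_sum_of_support_subset f hsupp, hF,
      Finset.sum_image (by
        rintro ⟨a, b⟩ _ ⟨c, d⟩ _ h
        simp only [Prod.mk.injEq] at h
        exact Prod.ext (by omega) h.2),
      Finset.sum_product, hQ p]
    refine Finset.sum_congr rfl fun m hm => ?_
    have hidx : ∀ k : ℕ, (k : ℤ) + ((m : ℤ) - k) = (m : ℤ) := fun k => by ring
    have : ∀ k ∈ Finset.range (M + 1), f ((m : ℤ) - k, k) =
        (Q m).coeff k • (Polynomial.X ^ k * Polynomial.derivative^[m] p) := by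
      intro k _
      simp only [hf, hidx k, Int.toNat_natCast, hQz m, eval_iter_deriv_zero_div]
    rw [Finset.sum_congr rfl this, myTaylorMulAux]
    exact Finset.le_sup (f := fun m => (Q m).natDegree) hm
  · -- part (iii)
    intro Q' Qz' b' hQ' hQz' hQzneg' hb'
    have hQQ : ∀ m, Q' m = Q m := by
      intro m
      induction m using Nat.strong_induction_on with
      | _ m ih =>
        have h1 := hQ (Polynomial.X ^ m)
        have h2 := hQ' (Polynomial.X ^ m)
        rw [natDegree_X_pow] at h1 h2
        have h := h1.symm.trans h2
        rw [Finset.sum_range_succ, Finset.sum_range_succ] at h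
        have hs : (∑ k ∈ Finset.range m,
            Q k * Polynomial.derivative^[k] (Polynomial.X ^ m : Polynomial ℝ)) =
            ∑ k ∈ Finset.range m,
            Q' k * Polynomial.derivative^[k] (Polynomial.X ^ m : Polynomial ℝ) :=
          Finset.sum_congr rfl fun k hk => by rw [ih k (Finset.mem_range.mp hk)]
        rw [hs] at h
        have h3 := add_left_cancel h
        have hd : (Polynomial.derivative^[m] (Polynomial.X ^ m : Polynomial ℝ)) ≠ 0 := by
          rw [Polynomial.iterate_derivative_X_pow_eq_C_mul, Nat.sub_self, pow_zero, mul_one,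
            Nat.descFactorial_self]
          simp [Nat.factorial_ne_zero]
        exact (mul_right_cancel₀ hd h3).symm
    intro n k
    rw [hb', hb]
    refine Finset.sum_congr rfl fun j _ => ?_
    congr 2
    by_cases h : 0 ≤ (j : ℤ) + n
    · have ht := Int.toNat_of_nonneg h
      rw [← ht, hQz', hQz, hQQ]
    · rw [hQzneg' _ (by omega), hQzneg _ (by omega)]
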